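/- For the scalar linear system ż = az + bv with a < 0, the H∞ gain sup_{ω ∈ ℝ} |b|/|iω − a| equals |b/a|. Consequently, for f(x,u) = −α(x) + u·β(x) with equilibrium x̄ = g⁻¹(ū) where g = α/β, the linearization at (x̄, ū) has a = ∂f/∂x(x̄,ū), b = ∂f/∂u(x̄,ū) = β(x̄), and |a/b| = g'(x̄), so the H∞ gain of the linearization equals (g⁻¹)'(ū). -/

import Mathlib

open Filter Complex

/-- The H∞ gain of `ż = Az + Bv` with `A < 0` is `|B/A|`; for `f(x,u) = -α(x) + u β(x)`
linearized at the equilibrium `x̄` (with `ū = g(x̄)`, `g = α/β`), one has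
`A = ∂f/∂x(x̄,ū) = -α'(x̄) + ū β'(x̄)`, `B = ∂f/∂u(x̄,ū) = β(x̄)`, `|A/B| = g'(x̄)`, and
hence the H∞ gain of the linearization equals `(g⁻¹)'(ū) = 1/g'(x̄)`. -/
theorem stmt19 (α β : ℝ → ℝ) (xbar : ℝ)
    (hα : DifferentiableAt ℝ α xbar) (hβ : DifferentiableAt ℝ β xbar)
    (hβpos : 0 < β xbar) :
    let g : ℝ → ℝ := fun x => α x / β x
    let ubar : ℝ := α xbar / β xbar
    let A : ℝ := -deriv α xbar + ubar * deriv β xbar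
    let B : ℝ := β xbar
    A < 0 →
    ((⨆ w : ℝ, |B| / ‖Complex.I * w - A‖) = |B / A| ∧
     |A / B| = deriv g xbar ∧
     (⨆ w : ℝ, |B| / ‖Complex.I * w - A‖) = (deriv g xbar)⁻¹) := by
  intro g ubar A B hA
  have hAne : A ≠ 0 := ne_of_lt hA
  have hAabs : 0 < |A| := abs_pos.mpr hAne
  have hBne : B ≠ 0 := ne_of_gt hβpos
  -- key bound: |I w - A| ≥ |A|
  have hkey : ∀ w : ℝ, |A| ≤ ‖Complex.I * w - A‖ := by
    intro w
    calc |A| = |(Complex.I * (w:ℂ) - (A:ℂ)).re| := by simp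
      _ ≤ _ := Complex.abs_re_le_norm _
  have hle : ∀ w : ℝ, |B| / ‖Complex.I * w - A‖ ≤ |B| / |A| := by
    intro w
    exact div_le_div_of_nonneg_left (abs_nonneg B) hAabs (hkey w)
  have hbdd : BddAbove (Set.range fun w : ℝ => |B| / ‖Complex.I * w - A‖) :=
    ⟨|B| / |A|, by rintro _ ⟨w, rfl⟩; exact hle w⟩
  have h0 : |B| / ‖Complex.I * (0:ℝ) - A‖ = |B| / |A| := by
    simp [Complex.norm_real]
  have hsup : (⨆ w : ℝ, |B| / ‖Complex.I * w - A‖) = |B / A| := by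
    rw [abs_div]
    apply le_antisymm (ciSup_le hle)
    calc |B| / |A| = |B| / ‖Complex.I * (0:ℝ) - A‖ := h0.symm
      _ ≤ _ := le_ciSup hbdd 0
  have hderiv : deriv g xbar =
      (deriv α xbar * β xbar - α xbar * deriv β xbar) / (β xbar) ^ 2 := by
    exact deriv_div hα hβ (ne_of_gt hβpos)
  have hAB : |A / B| = deriv g xbar := by
    have hABneg : A / B < 0 := div_neg_of_neg_of_pos hA hβpos
    rw [abs_of_neg hABneg, hderiv]
    show -((-deriv α xbar + α xbar / β xbar * deriv β xbar) / β xbar) = _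
    field_simp
    ring
  refine ⟨hsup, hAB, ?_⟩
  rw [hsup, ← hAB, abs_div, abs_div, inv_div]
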